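/- The inverse function H⁻¹ is continuous, strictly decreasing and convex on [0, ∞), and it is uniformly continuous on [0, ∞). If in addition G(y) → 0 as y → −∞, then for every ε > 0 there exists c ≥ 0 such that H⁻¹ is (1 + ε)-Lipschitz on [c, ∞). -/

import Mathlib

open MeasureTheory Filter Set

/-- `H⁻¹` is continuous, strictly decreasing, convex and uniformly continuous
on `[0, ∞)`; if moreover `G(y) → 0` as `y → -∞`, then for every `ε > 0` there is `c ≥ 0`
such that `H⁻¹` is `(1 + ε)`-Lipschitz on `[c, ∞)`. -/
theorem stmt_2
    (G : ℝ → ℝ) (ystar : ℝ)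
    (hmono : Monotone G)
    (hrc : ∀ y, ContinuousWithinAt G (Set.Ici y) y)
    (hG0 : ∀ y, 0 ≤ G y) (hG1 : ∀ y, G y ≤ 1)
    (hstar : ∀ y, G y = 1 ↔ ystar ≤ y)
    (H : ℝ → ℝ)
    (hH : ∀ y, H y = ∫ η in Set.Ioc y ystar, (1 - G η))
    (Hinv : ℝ → ℝ)
    (hinv_mem : ∀ z, 0 ≤ z → Hinv z ≤ ystar)
    (hinv_right : ∀ z, 0 ≤ z → H (Hinv z) = z)
    (hinv_left : ∀ y, y ≤ ystar → Hinv (H y) = y) :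
    ContinuousOn Hinv (Set.Ici 0) ∧
    StrictAntiOn Hinv (Set.Ici 0) ∧
    ConvexOn ℝ (Set.Ici 0) Hinv ∧
    UniformContinuousOn Hinv (Set.Ici 0) ∧
    (Filter.Tendsto G Filter.atBot (nhds 0) →
      ∀ ε : ℝ, 0 < ε → ∃ c : ℝ, 0 ≤ c ∧
        LipschitzOnWith (Real.toNNReal (1 + ε)) Hinv (Set.Ici c)) := by
  -- integrand
  have hanti : Antitone (fun η : ℝ => 1 - G η) := fun a b hab => by
    simp only [sub_le_sub_iff_left]; exact hmono hab
  have hint : ∀ a b : ℝ, IntervalIntegrable (fun η : ℝ => 1 - G η) volume a b :=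
    fun a b => hanti.intervalIntegrable
  -- interval-integral form of H
  have hH' : ∀ y, H y = ∫ η in y..ystar, (1 - G η) := by
    intro y
    rcases le_or_gt y ystar with h | h
    · rw [hH y, intervalIntegral.integral_of_le h]
    · rw [hH y, Set.Ioc_eq_empty (by linarith), intervalIntegral.integral_of_ge h.le]
      rw [Measure.restrict_empty, integral_zero_measure]
      have : ∫ η in Set.Ioc ystar y, (1 - G η) = ∫ _η in Set.Ioc ystar y, (0 : ℝ) := by
        apply setIntegral_congr_fun measurableSet_Ioc
        intro x hx
        have : G x = 1 := (hstar x).2 hx.1.le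
        simp [this]
      simp [this]
  -- additivity
  have hsplit : ∀ a b : ℝ, H a = (∫ η in a..b, (1 - G η)) + H b := by
    intro a b
    rw [hH' a, hH' b, intervalIntegral.integral_add_adjacent_intervals (hint a b) (hint b ystar)]
  -- bounds on the interval integral
  have hlow : ∀ a b : ℝ, a ≤ b → (b - a) * (1 - G b) ≤ ∫ η in a..b, (1 - G η) := by
    intro a b hab
    have h := intervalIntegral.integral_mono_on hab (intervalIntegrable_const (c := 1 - G b))
      (hint a b) (fun x hx => by simp only [sub_le_sub_iff_left]; exact hmono hx.2)
    rwa [intervalIntegral.integral_const, smul_eq_mul] at h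
  have hup : ∀ a b : ℝ, a ≤ b → (∫ η in a..b, (1 - G η)) ≤ (b - a) * (1 - G a) := by
    intro a b hab
    have h := intervalIntegral.integral_mono_on hab (hint a b)
      (intervalIntegrable_const (c := 1 - G a))
      (fun x hx => by simp only [sub_le_sub_iff_left]; exact hmono hx.1)
    rwa [intervalIntegral.integral_const, smul_eq_mul] at h
  -- H is antitone
  have hHanti : ∀ a b : ℝ, a ≤ b → H b ≤ H a := by
    intro a b hab
    have h1 := hlow a b hab
    have h2 : 0 ≤ (b - a) * (1 - G b) :=
      mul_nonneg (by linarith) (by linarith [hG1 b])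
    have := hsplit a b
    linarith
  -- H ystar = 0, H y = 0 for y ≥ ystar
  have hH0 : H ystar = 0 := by
    rw [hH ystar, Set.Ioc_eq_empty (lt_irrefl ystar)]
    simp
  -- H nonneg
  have hHnonneg : ∀ y, 0 ≤ H y := by
    intro y
    rcases le_or_gt y ystar with h | h
    · have := hHanti y ystar h; linarith
    · rw [hH y, Set.Ioc_eq_empty (by linarith)]; simp
  -- strict antitonicity on Iic ystar
  have hGlt : ∀ y, y < ystar → G y < 1 := by
    intro y hy
    rcases lt_or_eq_of_le (hG1 y) with h | h
    · exact h
    · exact absurd ((hstar y).1 h) (by linarith)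
  have hHstrict : ∀ a b : ℝ, a < b → b ≤ ystar → H b < H a := by
    intro a b hab hb
    set m := (a + b) / 2 with hm
    have ham : a ≤ m := by simp only [hm]; linarith
    have hmb : m ≤ b := by simp only [hm]; linarith
    have hGm : G m < 1 := hGlt m (by simp only [hm]; linarith)
    have h1 := hlow a m ham
    have h2 := hlow m b hmb
    have e1 := hsplit a m
    have e2 := hsplit m b
    have hpos : 0 < (m - a) * (1 - G m) := by
      apply mul_pos (by simp only [hm]; linarith) (by linarith)
    have h3 : 0 ≤ (b - m) * (1 - G b) :=
      mul_nonneg (by linarith) (by linarith [hG1 b])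
    linarith
  -- basic facts about Hinv
  have hinv0 : Hinv 0 = ystar := by
    have := hinv_left ystar le_rfl
    rwa [hH0] at this
  -- key comparison
  have hkey : ∀ z, 0 ≤ z → ∀ y, y ≤ ystar → (H y ≤ z ↔ Hinv z ≤ y) := by
    intro z hz y hy
    constructor
    · intro h
      by_contra hlt
      push_neg at hlt
      have := hHstrict y (Hinv z) hlt (hinv_mem z hz)
      rw [hinv_right z hz] at this
      linarith
    · intro h
      have := hHanti (Hinv z) y h
      rw [hinv_right z hz] at this
      exact this
  -- strict antitonicity of Hinv
  have hsa : ∀ z₁ z₂ : ℝ, 0 ≤ z₁ → z₁ < z₂ → Hinv z₂ < Hinv z₁ := by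
    intro z₁ z₂ h1 h12
    by_contra h
    push_neg at h
    have := hHanti (Hinv z₁) (Hinv z₂) h
    rw [hinv_right z₁ h1, hinv_right z₂ (by linarith)] at this
    linarith
  have hstrictAnti : StrictAntiOn Hinv (Set.Ici 0) := fun a ha b _ hab => hsa a b ha hab
  have hinvanti : ∀ z₁ z₂ : ℝ, 0 ≤ z₁ → z₁ ≤ z₂ → Hinv z₂ ≤ Hinv z₁ := by
    intro z₁ z₂ h1 h12
    rcases eq_or_lt_of_le h12 with rfl | h
    · exact le_refl _
    · exact (hsa z₁ z₂ h1 h).le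
  -- convexity of H
  have hHconv : ConvexOn ℝ Set.univ H := by
    apply convexOn_of_slope_mono_adjacent convex_univ
    intro x y z _ _ hxy hyz
    have h1 : H y - H x ≤ (y - x) * (G y - 1) := by
      have := hlow x y hxy.le
      have := hsplit x y
      nlinarith [hlow x y hxy.le, hsplit x y]
    have h2 : (z - y) * (G y - 1) ≤ H z - H y := by
      nlinarith [hup y z hyz.le, hsplit y z]
    rw [div_le_div_iff₀ (by linarith) (by linarith)]
    calc (H y - H x) * (z - y) ≤ ((y - x) * (G y - 1)) * (z - y) :=
          mul_le_mul_of_nonneg_right h1 (by linarith)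
      _ = ((z - y) * (G y - 1)) * (y - x) := by ring
      _ ≤ (H z - H y) * (y - x) := mul_le_mul_of_nonneg_right h2 (by linarith)
  -- convexity of Hinv
  have hconv : ConvexOn ℝ (Set.Ici 0) Hinv := by
    refine ⟨convex_Ici 0, ?_⟩
    intro x hx y hy a b ha hb hab
    simp only [smul_eq_mul]
    set u := Hinv x with hu
    set v := Hinv y with hv
    have hux : u ≤ ystar := hinv_mem x hx
    have hvy : v ≤ ystar := hinv_mem y hy
    have hcomb : a * u + b * v ≤ ystar := by
      calc a * u + b * v ≤ a * ystar + b * ystar := by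
            apply add_le_add (mul_le_mul_of_nonneg_left hux ha)
              (mul_le_mul_of_nonneg_left hvy hb)
        _ = ystar := by rw [← add_mul, hab, one_mul]
    have hz : (0:ℝ) ≤ a * x + b * y := add_nonneg (mul_nonneg ha hx) (mul_nonneg hb hy)
    have hHle : H (a * u + b * v) ≤ a * x + b * y := by
      have := hHconv.2 (Set.mem_univ u) (Set.mem_univ v) ha hb hab
      simp only [smul_eq_mul] at this
      rw [hinv_right x hx, hinv_right y hy] at this
      exact this
    exact (hkey (a * x + b * y) hz (a * u + b * v) hcomb).1 hHle
  -- continuity of Hinv on Ici 0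
  have hcont : ContinuousOn Hinv (Set.Ici 0) := by
    intro a ha
    rw [Metric.continuousWithinAt_iff]
    intro ε hε
    have hyst : Hinv a ≤ ystar := hinv_mem a ha
    have hHy : H (Hinv a) = a := hinv_right a ha
    rcases eq_or_lt_of_le (α := ℝ) ha with h0 | hpos
    · -- a = 0
      have hy0 : Hinv a = ystar := by rw [← h0, hinv0]
      refine ⟨H (ystar - ε/2), ?_, ?_⟩
      · have := hHstrict (ystar - ε/2) ystar (by linarith) le_rfl
        rw [hH0] at this; linarith
      · intro z hz hdz
        have hz0 : (0:ℝ) ≤ z := hz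
        rw [Real.dist_eq] at hdz ⊢
        have habs := abs_lt.1 hdz
        have hza : z < H (ystar - ε/2) := by
          have hHa : 0 ≤ a := ha
          linarith [habs.2, hHnonneg (ystar - ε/2), h0.symm.le]
        have hlow' : ystar - ε/2 < Hinv z := by
          by_contra h
          push_neg at h
          have := (hkey z hz0 (ystar - ε/2) (by linarith)).2 h
          linarith
        have hupp : Hinv z ≤ ystar := hinv_mem z hz0
        rw [hy0, abs_lt]
        constructor <;> linarith
    · -- a > 0
      have hylt : Hinv a < ystar := by
        rcases eq_or_lt_of_le hyst with h | h
        · exfalso; rw [h, hH0] at hHy; linarith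
        · exact h
      have hlu : Hinv a - ε/2 < Hinv a := by linarith
      have hyu : Hinv a < min (Hinv a + ε/2) ystar := lt_min_iff.2 ⟨by linarith, hylt⟩
      have huyst : min (Hinv a + ε/2) ystar ≤ ystar := min_le_right _ _
      have hHl : a < H (Hinv a - ε/2) := by
        have := hHstrict (Hinv a - ε/2) (Hinv a) hlu hyst; linarith
      have hHu : H (min (Hinv a + ε/2) ystar) < a := by
        have := hHstrict (Hinv a) (min (Hinv a + ε/2) ystar) hyu huyst; linarith
      refine ⟨min (H (Hinv a - ε/2) - a) (a - H (min (Hinv a + ε/2) ystar)),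
        lt_min_iff.2 ⟨by linarith, by linarith⟩, ?_⟩
      intro z hz hdz
      have hz0 : (0:ℝ) ≤ z := hz
      rw [Real.dist_eq] at hdz ⊢
      have habs := abs_lt.1 hdz
      have hm1 := min_le_left (H (Hinv a - ε/2) - a) (a - H (min (Hinv a + ε/2) ystar))
      have hm2 := min_le_right (H (Hinv a - ε/2) - a) (a - H (min (Hinv a + ε/2) ystar))
      have hd1 : z < H (Hinv a - ε/2) := by linarith [habs.2]
      have hd2 : H (min (Hinv a + ε/2) ystar) < z := by linarith [habs.1]
      have hlow' : Hinv a - ε/2 < Hinv z := by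
        by_contra h
        push_neg at h
        have := (hkey z hz0 (Hinv a - ε/2) (by linarith)).2 h
        linarith
      have hupp : Hinv z ≤ min (Hinv a + ε/2) ystar := (hkey z hz0 _ huyst).1 hd2.le
      have hule : min (Hinv a + ε/2) ystar ≤ Hinv a + ε/2 := min_le_left _ _
      rw [abs_lt]
      constructor <;> linarith
  -- Lipschitz estimate lemma
  have hlip : ∀ y₀, y₀ < ystar → ∀ z₁ z₂ : ℝ, H y₀ ≤ z₁ → H y₀ ≤ z₂ →
      |Hinv z₁ - Hinv z₂| ≤ (1 / (1 - G y₀)) * |z₁ - z₂| := by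
    intro y₀ hy₀ z₁ z₂ h1 h2
    have hG : G y₀ < 1 := hGlt y₀ hy₀
    have hGpos : 0 < 1 - G y₀ := by linarith
    -- ordered helper
    have key : ∀ w₁ w₂ : ℝ, H y₀ ≤ w₁ → w₁ ≤ w₂ →
        0 ≤ Hinv w₁ - Hinv w₂ ∧ Hinv w₁ - Hinv w₂ ≤ (1 / (1 - G y₀)) * (w₂ - w₁) := by
      intro w₁ w₂ hw1 hw12
      have hw1' : (0:ℝ) ≤ w₁ := le_trans (hHnonneg y₀) hw1
      have hw2' : (0:ℝ) ≤ w₂ := by linarith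
      set a₁ := Hinv w₁ with ha1
      set a₂ := Hinv w₂ with ha2
      have hha : a₂ ≤ a₁ := hinvanti w₁ w₂ hw1' hw12
      have ha1y₀ : a₁ ≤ y₀ := (hkey w₁ hw1' y₀ hy₀.le).1 hw1
      have hHa1 : H a₁ = w₁ := hinv_right w₁ hw1'
      have hHa2 : H a₂ = w₂ := hinv_right w₂ hw2'
      have hsplit' := hsplit a₂ a₁
      have hlb := hlow a₂ a₁ hha
      have hGa1 : G a₁ ≤ G y₀ := hmono ha1y₀
      have hest : (a₁ - a₂) * (1 - G y₀) ≤ w₂ - w₁ := by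
        have h5 : (a₁ - a₂) * (1 - G y₀) ≤ (a₁ - a₂) * (1 - G a₁) := by
          apply mul_le_mul_of_nonneg_left (by linarith) (by linarith)
        linarith
      constructor
      · linarith
      · rw [div_mul_eq_mul_div, one_mul, le_div_iff₀ hGpos]
        linarith
    rcases le_total z₁ z₂ with h | h
    · obtain ⟨hp, hq⟩ := key z₁ z₂ h1 h
      rw [abs_of_nonneg hp, abs_of_nonpos (by linarith)]
      linarith
    · obtain ⟨hp, hq⟩ := key z₂ z₁ h2 h
      rw [abs_of_nonpos (by linarith), abs_of_nonneg (by linarith)]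
      linarith
  -- uniform continuity
  have hUC : UniformContinuousOn Hinv (Set.Ici 0) := by
    rw [Metric.uniformContinuousOn_iff]
    intro ε hε
    set y₀ := ystar - 1 with hy₀def
    have hy₀ : y₀ < ystar := by simp only [hy₀def]; linarith
    set c₀ := H y₀ with hc₀
    have hc₀pos : 0 < c₀ := by
      have := hHstrict y₀ ystar hy₀ le_rfl
      rw [hH0] at this; exact this
    set K := 1 / (1 - G y₀) with hK
    have hGy₀ : G y₀ < 1 := hGlt y₀ hy₀
    have hKpos : 0 < K := by
      apply div_pos one_pos; linarith
    -- uniform continuity on the compact part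
    have hCUC : UniformContinuousOn Hinv (Set.Icc 0 (c₀ + 1)) :=
      isCompact_Icc.uniformContinuousOn_of_continuous
        (hcont.mono (fun x hx => hx.1))
    rw [Metric.uniformContinuousOn_iff] at hCUC
    obtain ⟨δ₁, hδ₁, hδ₁prop⟩ := hCUC ε hε
    refine ⟨min δ₁ (min 1 (ε / (K + 1))), by positivity, ?_⟩
    intro x hx z hz hd
    have hd1 : dist x z < δ₁ := lt_of_lt_of_le hd (min_le_left _ _)
    have hd2 : dist x z < 1 := lt_of_lt_of_le hd (le_trans (min_le_right _ _) (min_le_left _ _))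
    have hd3 : dist x z < ε / (K + 1) :=
      lt_of_lt_of_le hd (le_trans (min_le_right _ _) (min_le_right _ _))
    rcases le_or_gt c₀ (min x z) with hcase | hcase
    · -- both ≥ c₀ : Lipschitz estimate
      have hx' : c₀ ≤ x := le_trans hcase (min_le_left _ _)
      have hz' : c₀ ≤ z := le_trans hcase (min_le_right _ _)
      have h1 := hlip y₀ hy₀ x z hx' hz'
      rw [← hK] at h1
      rw [Real.dist_eq] at hd3 ⊢
      have hKe : K * (ε / (K + 1)) < ε := by
        have h2 : K / (K + 1) < 1 := by
          rw [div_lt_one (by linarith)]; linarith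
        calc K * (ε / (K + 1)) = K / (K + 1) * ε := by ring
          _ < 1 * ε := mul_lt_mul_of_pos_right h2 hε
          _ = ε := one_mul ε
      have h4 : K * |x - z| < K * (ε / (K + 1)) := mul_lt_mul_of_pos_left hd3 hKpos
      linarith
    · -- both in [0, c₀+1]
      have hxz : max x z ≤ c₀ + 1 := by
        rw [Real.dist_eq] at hd2
        rcases le_total x z with h | h
        · rw [max_eq_right h]
          have : min x z = x := min_eq_left h
          rw [this] at hcase
          have := abs_lt.1 hd2
          linarith [this.1]
        · rw [max_eq_left h]
          have : min x z = z := min_eq_right h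
          rw [this] at hcase
          have := abs_lt.1 hd2
          linarith [this.2]
      have hxm : x ∈ Set.Icc (0:ℝ) (c₀ + 1) :=
        ⟨hx, le_trans (le_max_left _ _) hxz⟩
      have hzm : z ∈ Set.Icc (0:ℝ) (c₀ + 1) :=
        ⟨hz, le_trans (le_max_right _ _) hxz⟩
      exact hδ₁prop x hxm z hzm hd1
  refine ⟨hcont, hstrictAnti, hconv, hUC, ?_⟩
  -- Lipschitz with constant 1 + ε for z large
  intro hGbot ε hε
  have hεε : 0 < ε / (1 + ε) := by positivity
  have hev : ∀ᶠ y in Filter.atBot, G y < ε / (1 + ε) :=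
    hGbot.eventually_lt_const hεε
  obtain ⟨y₁, hy₁⟩ := hev.exists
  set y₀ := min y₁ (ystar - 1) with hy₀def
  have hy₀st : y₀ < ystar := lt_of_le_of_lt (min_le_right _ _) (by linarith)
  have hGy₀ : G y₀ < ε / (1 + ε) := lt_of_le_of_lt (hmono (min_le_left _ _)) hy₁
  have hGlow : 1 / (1 + ε) < 1 - G y₀ := by
    have : 1 - ε / (1 + ε) = 1 / (1 + ε) := by field_simp; ring
    linarith
  refine ⟨H y₀, hHnonneg y₀, ?_⟩
  rw [lipschitzOnWith_iff_dist_le_mul]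
  intro x hx z hz
  have hcoe : ((Real.toNNReal (1 + ε) : NNReal) : ℝ) = 1 + ε :=
    Real.coe_toNNReal _ (by linarith)
  rw [hcoe, Real.dist_eq, Real.dist_eq]
  have h1 := hlip y₀ hy₀st x z hx hz
  have hle : 1 / (1 - G y₀) ≤ 1 + ε := by
    rw [div_le_iff₀ (by linarith [hGlt y₀ hy₀st])]
    rw [div_lt_iff₀ (by linarith)] at hGlow
    nlinarith
  calc |Hinv x - Hinv z| ≤ (1 / (1 - G y₀)) * |x - z| := h1
    _ ≤ (1 + ε) * |x - z| := mul_le_mul_of_nonneg_right hle (abs_nonneg _)
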